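/- Let μ be a nonatomic finite measure on [0,1] and define f: C^n → R by f(x) = μ(O_+(x)) - μ(O_-(x)), where (O_+(x), O_-(x)) is the n-cut partition of [0,1] encoded by x ∈ C^n. Then f is continuous and odd: f(-x) = -f(x) for all x ∈ C^n. -/

import Mathlib

open MeasureTheory Set Filter Topology

/-- Cut points: `cutPt x k = Σ_{i < k} |x i|`. -/
noncomputable def cutPt {n : ℕ} (x : Fin (n + 1) → ℝ) (k : ℕ) : ℝ :=
  ∑ i : Fin (n + 1), if (i : ℕ) < k then |x i| else 0

/-- The positive portion of the partition of `[0,1]` encoded by `x`. -/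
noncomputable def Opos {n : ℕ} (x : Fin (n + 1) → ℝ) : Set ℝ :=
  ⋃ k : Fin (n + 1), if 0 ≤ x k then Set.Icc (cutPt x (k : ℕ)) (cutPt x ((k : ℕ) + 1)) else ∅

/-- The negative portion of the partition of `[0,1]` encoded by `x`. -/
noncomputable def Oneg {n : ℕ} (x : Fin (n + 1) → ℝ) : Set ℝ :=
  ⋃ k : Fin (n + 1), if x k < 0 then Set.Icc (cutPt x (k : ℕ)) (cutPt x ((k : ℕ) + 1)) else ∅

/-- The (signed) discrepancy of the measure `μ` at the partition encoded by `x`. -/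
noncomputable def disc {n : ℕ} (μ : Measure ℝ) (x : Fin (n + 1) → ℝ) : ℝ :=
  (μ (Opos x)).toReal - (μ (Oneg x)).toReal

noncomputable def Fcdf (μ : Measure ℝ) (t : ℝ) : ℝ := (μ (Set.Iic t)).toReal

lemma Fcdf_continuous (μ : Measure ℝ) [IsFiniteMeasure μ] [NullSingletonClass μ] :
    Continuous (Fcdf μ) := by
  rw [continuous_iff_continuousAt]
  intro a
  have key : Tendsto (fun t => μ (Set.Iic t)) (𝓝 a) (𝓝 (μ (Set.Iic a))) := by
    rw [← nhdsLT_sup_nhdsGE a, tendsto_sup]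
    constructor
    · -- left limit
      have hcg : (atTop : Filter (Iio a)).IsCountablyGenerated := by
        rw [← comap_coe_Iio_nhdsLT]; infer_instance
      have h1 : Tendsto (fun r : Iio a => μ (Set.Iic (r : ℝ))) atTop
          (𝓝 (μ (⋃ r : Iio a, Set.Iic (r : ℝ)))) :=
        tendsto_measure_iUnion_atTop (fun r s hrs => by
          exact Set.Iic_subset_Iic.2 (by exact_mod_cast hrs))
      have h2 : (⋃ r : Iio a, Set.Iic (r : ℝ)) = Set.Iio a := by
        ext y
        simp only [Set.mem_iUnion, Set.mem_Iic, Set.mem_Iio, Subtype.exists, exists_prop,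
          Set.mem_Iio]
        constructor
        · rintro ⟨r, hr, hy⟩; exact lt_of_le_of_lt hy hr
        · intro hy; obtain ⟨r, h1, h2⟩ := exists_between hy; exact ⟨r, h2, h1.le⟩
      have h3 : μ (Set.Iio a) = μ (Set.Iic a) := measure_congr Iio_ae_eq_Iic
      rw [h2, h3] at h1
      rw [← map_coe_Iio_atTop a, tendsto_map'_iff]
      exact h1
    · -- right limit
      have h1 : Tendsto (μ ∘ Set.Iic) (𝓝[>] a) (𝓝 (μ (⋂ r > a, Set.Iic r))) :=
        tendsto_measure_biInter_gt (fun r _ => measurableSet_Iic.nullMeasurableSet)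
          (fun i j _ hij => Set.Iic_subset_Iic.2 hij) ⟨a + 1, by linarith, measure_ne_top μ _⟩
      have h2 : (⋂ r > a, Set.Iic r) = Set.Iic a := by
        ext y
        simp only [Set.mem_iInter, Set.mem_Iic]
        exact ⟨fun h => le_of_forall_gt_imp_ge_of_dense fun c hc => h c hc, fun h c hc => h.trans hc.le⟩
      rw [h2] at h1
      rw [show (Set.Ici a) = insert a (Set.Ioi a) from Set.Ioi_insert.symm,
        nhdsWithin_insert, tendsto_sup]
      exact ⟨tendsto_pure_nhds _ _, h1⟩
  exact (ENNReal.tendsto_toReal (measure_ne_top μ _)).comp key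

lemma Fcdf_mono (μ : Measure ℝ) [IsFiniteMeasure μ] {a b : ℝ} (h : a ≤ b) :
    Fcdf μ a ≤ Fcdf μ b := by
  unfold Fcdf
  exact ENNReal.toReal_mono (measure_ne_top μ _) (measure_mono (Set.Iic_subset_Iic.2 h))

lemma measure_Icc_toReal (μ : Measure ℝ) [IsFiniteMeasure μ] [NullSingletonClass μ] {a b : ℝ} (h : a ≤ b) :
    (μ (Set.Icc a b)).toReal = Fcdf μ b - Fcdf μ a := by
  have h1 : μ (Set.Icc a b) = μ (Set.Ioc a b) := (measure_congr (Ioc_ae_eq_Icc (μ := μ))).symm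
  have h2 : Set.Iic a ∪ Set.Ioc a b = Set.Iic b := Set.Iic_union_Ioc_eq_Iic h
  have h3 : μ (Set.Iic b) = μ (Set.Iic a) + μ (Set.Ioc a b) := by
    rw [← h2, measure_union (Set.Iic_disjoint_Ioc le_rfl) measurableSet_Ioc]
  have h4 : Fcdf μ b = Fcdf μ a + (μ (Set.Ioc a b)).toReal := by
    unfold Fcdf
    rw [h3, ENNReal.toReal_add (measure_ne_top μ _) (measure_ne_top μ _)]
  rw [h1, h4]; ring

section cut

variable {n : ℕ}

lemma cutPt_succ (x : Fin (n + 1) → ℝ) (k : Fin (n + 1)) :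
    cutPt x ((k : ℕ) + 1) = cutPt x (k : ℕ) + |x k| := by
  unfold cutPt
  have key : ∀ i : Fin (n + 1), (if (i : ℕ) < (k : ℕ) + 1 then |x i| else 0)
      = (if (i : ℕ) < (k : ℕ) then |x i| else 0) + (if i = k then |x i| else 0) := by
    intro i
    rcases lt_trichotomy (i : ℕ) (k : ℕ) with h | h | h
    · have hik : i ≠ k := fun hc => absurd (congrArg Fin.val hc) h.ne
      simp [h, Nat.lt_succ_of_lt h, hik]
    · have hik : i = k := Fin.ext h
      simp [hik]
    · have h1 : ¬ (i : ℕ) < (k : ℕ) + 1 := by omega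
      have h2 : ¬ (i : ℕ) < (k : ℕ) := by omega
      have hik : i ≠ k := fun hc => absurd (congrArg Fin.val hc) (by omega)
      simp [h1, h2, hik]
  rw [Finset.sum_congr rfl (fun i _ => key i), Finset.sum_add_distrib,
    Finset.sum_ite_eq' Finset.univ k (fun i => |x i|)]
  simp

lemma cutPt_mono (x : Fin (n + 1) → ℝ) {j k : ℕ} (h : j ≤ k) :
    cutPt x j ≤ cutPt x k := by
  unfold cutPt
  refine Finset.sum_le_sum fun i _ => ?_
  split_ifs with h1 h2 h2
  · exact le_rfl
  · exact absurd (lt_of_lt_of_le h1 h) h2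
  · exact abs_nonneg _
  · exact le_rfl

lemma cutPt_le_succ (x : Fin (n + 1) → ℝ) (k : Fin (n + 1)) :
    cutPt x (k : ℕ) ≤ cutPt x ((k : ℕ) + 1) :=
  cutPt_mono x (Nat.le_succ _)

lemma cutPt_continuous (k : ℕ) :
    Continuous fun x : Fin (n + 1) → ℝ => cutPt x k := by
  unfold cutPt
  refine continuous_finset_sum _ fun i _ => ?_
  split_ifs with h
  · exact (continuous_apply i).abs
  · exact continuous_const

lemma cutPt_neg (x : Fin (n + 1) → ℝ) (k : ℕ) : cutPt (-x) k = cutPt x k := by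
  unfold cutPt
  simp [abs_neg]

/-- Key lemma: the measure of the union of selected intervals is the sum. -/
lemma measure_cut_union (μ : Measure ℝ) [IsFiniteMeasure μ] [NullSingletonClass μ]
    (x : Fin (n + 1) → ℝ) (p : Fin (n + 1) → Prop) [DecidablePred p] :
    (μ (⋃ k : Fin (n + 1),
        if p k then Set.Icc (cutPt x (k : ℕ)) (cutPt x ((k : ℕ) + 1)) else ∅)).toReal
      = ∑ k : Fin (n + 1),
          if p k then Fcdf μ (cutPt x ((k : ℕ) + 1)) - Fcdf μ (cutPt x (k : ℕ)) else 0 := by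
  set A : Fin (n + 1) → Set ℝ := fun k =>
    if p k then Set.Icc (cutPt x (k : ℕ)) (cutPt x ((k : ℕ) + 1)) else ∅ with hA
  set B : Fin (n + 1) → Set ℝ := fun k =>
    if p k then Set.Ioo (cutPt x (k : ℕ)) (cutPt x ((k : ℕ) + 1)) else ∅ with hB
  have hBA : ∀ k, B k ⊆ A k := by
    intro k; simp only [hA, hB]; split_ifs
    · exact Set.Ioo_subset_Icc_self
    · exact subset_rfl
  have hmeasB : ∀ k, μ (B k) = μ (A k) := by
    intro k; simp only [hA, hB]; split_ifs
    · exact measure_congr Ioo_ae_eq_Icc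
    · rfl
  have hBmeas : ∀ k, MeasurableSet (B k) := by
    intro k; simp only [hB]; split_ifs
    · exact measurableSet_Ioo
    · exact MeasurableSet.empty
  have hdd : ∀ j k : Fin (n + 1), (j : ℕ) < (k : ℕ) → Disjoint (B j) (B k) := by
    intro j k hlt
    rw [Set.disjoint_left]
    intro y hyj hyk
    simp only [hB] at hyj hyk
    split_ifs at hyj hyk
    · have h1 : y < cutPt x ((j : ℕ) + 1) := hyj.2
      have h2 : cutPt x (k : ℕ) < y := hyk.1
      have h3 : cutPt x ((j : ℕ) + 1) ≤ cutPt x (k : ℕ) := cutPt_mono x (by omega)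
      linarith
    · exact hyk
    · exact hyj
    · exact hyj
  have hdisj : Pairwise (Function.onFun Disjoint B) := by
    intro j k hjk
    rcases Nat.lt_trichotomy (j : ℕ) (k : ℕ) with h | h | h
    · exact hdd j k h
    · exact absurd (Fin.ext h) hjk
    · exact (hdd k j h).symm
  have hmain : μ (⋃ k, A k) = ∑ k : Fin (n + 1), μ (A k) := by
    apply le_antisymm
    · exact (measure_iUnion_le A).trans (le_of_eq (tsum_fintype _))
    · calc ∑ k : Fin (n + 1), μ (A k) = ∑ k : Fin (n + 1), μ (B k) := by
            exact Finset.sum_congr rfl fun k _ => (hmeasB k).symm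
        _ = ∑' k : Fin (n + 1), μ (B k) := (tsum_fintype _).symm
        _ = μ (⋃ k, B k) := (measure_iUnion hdisj hBmeas).symm
        _ ≤ μ (⋃ k, A k) := measure_mono (Set.iUnion_mono hBA)
  rw [hmain, ENNReal.toReal_sum (fun k _ => measure_ne_top μ _)]
  refine Finset.sum_congr rfl fun k _ => ?_
  simp only [hA]
  split_ifs
  · exact measure_Icc_toReal μ (cutPt_le_succ x k)
  · simp

lemma disc_eq_sum (μ : Measure ℝ) [IsFiniteMeasure μ] [NullSingletonClass μ] (x : Fin (n + 1) → ℝ) :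
    disc μ x = ∑ k : Fin (n + 1),
      Real.sign (x k) * (Fcdf μ (cutPt x ((k : ℕ) + 1)) - Fcdf μ (cutPt x (k : ℕ))) := by
  unfold disc Opos Oneg
  rw [measure_cut_union μ x (fun k => 0 ≤ x k), measure_cut_union μ x (fun k => x k < 0),
    ← Finset.sum_sub_distrib]
  refine Finset.sum_congr rfl fun k _ => ?_
  rcases lt_trichotomy (x k) 0 with h | h | h
  · rw [if_neg (not_le.2 h), if_pos h, Real.sign_of_neg h]; ring
  · have hD : cutPt x ((k : ℕ) + 1) = cutPt x (k : ℕ) := by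
      rw [cutPt_succ, h]; simp
    rw [if_pos h.ge, if_neg (by rw [h]; exact lt_irrefl 0), hD, h, Real.sign_zero]; ring
  · rw [if_pos h.le, if_neg (not_lt.2 h.le), Real.sign_of_pos h]; ring

end cut

lemma abs_sign_le_one (r : ℝ) : |Real.sign r| ≤ 1 := by
  rcases Real.sign_apply_eq r with h | h | h <;> rw [h] <;> norm_num

lemma summand_continuous {n : ℕ} (μ : Measure ℝ) [IsFiniteMeasure μ] [NullSingletonClass μ]
    (k : Fin (n + 1)) :
    Continuous fun x : Fin (n + 1) → ℝ =>
      Real.sign (x k) * (Fcdf μ (cutPt x ((k : ℕ) + 1)) - Fcdf μ (cutPt x (k : ℕ))) := by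
  have hD : Continuous fun x : Fin (n + 1) → ℝ =>
      Fcdf μ (cutPt x ((k : ℕ) + 1)) - Fcdf μ (cutPt x (k : ℕ)) :=
    ((Fcdf_continuous μ).comp (cutPt_continuous _)).sub
      ((Fcdf_continuous μ).comp (cutPt_continuous _))
  rw [continuous_iff_continuousAt]
  intro x0
  rcases lt_trichotomy (x0 k) 0 with h | h | h
  · have hev : ∀ᶠ x : Fin (n + 1) → ℝ in 𝓝 x0, x k < 0 :=
      ((continuous_apply k).tendsto x0).eventually_lt_const h
    refine (hD.continuousAt.neg).congr ?_
    filter_upwards [hev] with x hx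
    rw [Real.sign_of_neg hx, Pi.neg_apply]; ring
  · have hval : Real.sign (x0 k) *
        (Fcdf μ (cutPt x0 ((k : ℕ) + 1)) - Fcdf μ (cutPt x0 (k : ℕ))) = 0 := by
      rw [h, Real.sign_zero, zero_mul]
    rw [ContinuousAt, hval]
    have hD0 : Fcdf μ (cutPt x0 ((k : ℕ) + 1)) - Fcdf μ (cutPt x0 (k : ℕ)) = 0 := by
      rw [cutPt_succ, h, abs_zero, add_zero, sub_self]
    apply squeeze_zero_norm
      (a := fun x => |Fcdf μ (cutPt x ((k : ℕ) + 1)) - Fcdf μ (cutPt x (k : ℕ))|)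
    · intro x
      rw [Real.norm_eq_abs, abs_mul]
      calc |Real.sign (x k)| * |Fcdf μ (cutPt x ((k : ℕ) + 1)) - Fcdf μ (cutPt x (k : ℕ))|
          ≤ 1 * |Fcdf μ (cutPt x ((k : ℕ) + 1)) - Fcdf μ (cutPt x (k : ℕ))| :=
            mul_le_mul_of_nonneg_right (abs_sign_le_one _) (abs_nonneg _)
        _ = _ := one_mul _
    · have := hD.abs.continuousAt (x := x0)
      rwa [ContinuousAt, hD0, abs_zero] at this
  · have hev : ∀ᶠ x : Fin (n + 1) → ℝ in 𝓝 x0, 0 < x k :=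
      ((continuous_apply k).tendsto x0).eventually_const_lt h
    refine hD.continuousAt.congr ?_
    filter_upwards [hev] with x hx
    rw [Real.sign_of_pos hx, one_mul]

/-- For a nonatomic finite measure `μ` on `[0,1]`, the function
`f(x) = μ(O₊(x)) - μ(O₋(x))` on `C^n = {x : Σ|xᵢ| = 1}` is continuous and odd:
`f(-x) = -f(x)` for all `x ∈ C^n`. -/
theorem disc_continuousOn_and_odd (n : ℕ) (μ : Measure ℝ)
    [IsFiniteMeasure μ] [NullSingletonClass μ] :
    ContinuousOn (fun x : Fin (n + 1) → ℝ => disc μ x)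
      {x : Fin (n + 1) → ℝ | ∑ i, |x i| = 1} ∧
    ∀ x ∈ {x : Fin (n + 1) → ℝ | ∑ i, |x i| = 1}, disc μ (-x) = -disc μ x := by
  constructor
  · have heq : (fun x : Fin (n + 1) → ℝ => disc μ x) = fun x => ∑ k : Fin (n + 1),
        Real.sign (x k) * (Fcdf μ (cutPt x ((k : ℕ) + 1)) - Fcdf μ (cutPt x (k : ℕ))) :=
      funext fun x => disc_eq_sum μ x
    rw [heq]
    exact (continuous_finset_sum _ fun k _ => summand_continuous μ k).continuousOn
  · intro x _
    rw [disc_eq_sum, disc_eq_sum, ← Finset.sum_neg_distrib]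
    refine Finset.sum_congr rfl fun k _ => ?_
    simp only [cutPt_neg, Pi.neg_apply, Real.sign_neg, neg_mul]
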